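/- In a symmetric monoidal category where every object carries a cocommutative comonoid structure with Π_t = id_t, the following are equivalent: (i) ρ_t ∘ (Π_A ∧ Π_B) = Π_{A∧B} for all A, B; (ii) Π_{t∧t} = ρ_t and the class of maps preserving the counit is closed under ∧. -/

import Mathlib

open CategoryTheory CategoryTheory.MonoidalCategory

/-- In a symmetric monoidal category with cocommutative comonoids `(Δ_A, Π_A)`
on every object satisfying `Π_t = id_t`, the following are equivalent:
(i) `ρ_t ∘ (Π_A ∧ Π_B) = Π_{A∧B}` for all `A B`;
(ii) `Π_{t∧t} = ρ_t` and the maps preserving the counit are closed under `∧`. -/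
theorem stmt4 {C : Type*} [Category C] [MonoidalCategory C] [SymmetricCategory C]
    (Δ : ∀ A : C, A ⟶ A ⊗ A) (Pi : ∀ A : C, A ⟶ 𝟙_ C)
    (coassoc : ∀ A : C, Δ A ≫ (Δ A ⊗ₘ 𝟙 A) ≫ (α_ A A A).hom = Δ A ≫ (𝟙 A ⊗ₘ Δ A))
    (cocomm : ∀ A : C, Δ A ≫ (β_ A A).hom = Δ A)
    (counit_r : ∀ A : C, Δ A ≫ (𝟙 A ⊗ₘ Pi A) ≫ (ρ_ A).hom = 𝟙 A)
    (counit_l : ∀ A : C, Δ A ≫ (Pi A ⊗ₘ 𝟙 A) ≫ (λ_ A).hom = 𝟙 A)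
    (B2a : Pi (𝟙_ C) = 𝟙 (𝟙_ C)) :
    (∀ A B : C, (Pi A ⊗ₘ Pi B) ≫ (ρ_ (𝟙_ C)).hom = Pi (A ⊗ B)) ↔
    (Pi (𝟙_ C ⊗ 𝟙_ C) = (ρ_ (𝟙_ C)).hom ∧
      ∀ {A A' B B' : C} (f : A ⟶ A') (g : B ⟶ B'),
        f ≫ Pi A' = Pi A → g ≫ Pi B' = Pi B →
          (f ⊗ₘ g) ≫ Pi (A' ⊗ B') = Pi (A ⊗ B)) := by
  constructor
  · intro h
    constructor
    · rw [← h, B2a]; simp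
    · intro A A' B B' f g hf hg
      rw [← h, ← h A B, ← hf, ← hg]
      rw [← Category.assoc, tensorHom_comp_tensorHom]
  · rintro ⟨h1, h2⟩ A B
    have := h2 (Pi A) (Pi B) (by rw [B2a, Category.comp_id]) (by rw [B2a, Category.comp_id])
    rw [h1] at this
    exact this
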